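/- Let σ : A* → B* be a non-erasing right-marked morphism (the words σ(a), a ∈ A, end with pairwise distinct letters) and let X be a shift space on A. If σ is recognizable on X, then σ is one-sided recognizable on X⁺. -/

import Mathlib

open scoped Classical

noncomputable section

variable {A B : Type*}

/-- The two-sided shift map. -/
def shiftZ (x : ℤ → A) : ℤ → A := fun n => x (n + 1)

/-- The one-sided shift map. -/
def shiftN (x : ℕ → A) : ℕ → A := fun n => x (n + 1)

/-- The one-sided sequence `x⁺` associated to a two-sided sequence. -/
def plusSeq (x : ℤ → A) : ℕ → A := fun n => x (n : ℤ)

/-- The one-sided shift space `X⁺` associated to a set of two-sided sequences. -/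
def SetPlus (X : Set (ℤ → A)) : Set (ℕ → A) := plusSeq '' X

/-- `X` is a (two-sided) shift space: closed and shift invariant. -/
def IsShiftZ [TopologicalSpace A] (X : Set (ℤ → A)) : Prop :=
  IsClosed X ∧ shiftZ '' X = X

/-- `X` is a one-sided shift space: closed and shift invariant. -/
def IsShiftN [TopologicalSpace A] (X : Set (ℕ → A)) : Prop :=
  IsClosed X ∧ shiftN '' X = X

/-- Image of a word under a morphism given by its values on letters. -/
def wordImg (σ : A → List B) (w : List A) : List B := (w.map σ).flatten

/-- `σ(x₀ ⋯ x_{n-1})` for a one-sided sequence `x`. -/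
def prefixImg (σ : A → List B) (x : ℕ → A) (n : ℕ) : List B :=
  wordImg σ (List.ofFn fun i : Fin n => x i)

/-- `y = σ(x)` for one-sided sequences, with `σ(x)` infinite. -/
def OneSidedImage (σ : A → List B) (x : ℕ → A) (y : ℕ → B) : Prop :=
  (∀ m : ℕ, ∃ n : ℕ, m ≤ (prefixImg σ x n).length) ∧
  ∀ n : ℕ, ∀ i : ℕ, ∀ h : i < (prefixImg σ x n).length, y i = (prefixImg σ x n).get ⟨i, h⟩

/-- `σ(x_{[-n,m)})` for a two-sided sequence `x`. -/
def segImg (σ : A → List B) (x : ℤ → A) (n m : ℕ) : List B :=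
  wordImg σ (List.ofFn fun i : Fin (n + m) => x ((i : ℤ) - (n : ℤ)))

/-- `|σ(x_{[-n,0)})|`. -/
def negLen (σ : A → List B) (x : ℤ → A) (n : ℕ) : ℕ :=
  (wordImg σ (List.ofFn fun i : Fin n => x ((i : ℤ) - (n : ℤ)))).length

/-- `y = σ(x)` for two-sided sequences, with `σ(x)` two-sided infinite
(the letter `x₀` is sent at position `0`). -/
def TwoSidedImage (σ : A → List B) (x : ℤ → A) (y : ℤ → B) : Prop :=
  (∀ m : ℕ, ∃ n : ℕ, m ≤ (prefixImg σ (plusSeq x) n).length) ∧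
  (∀ m : ℕ, ∃ n : ℕ, m ≤ negLen σ x n) ∧
  ∀ n m : ℕ, ∀ i : ℕ, ∀ h : i < (segImg σ x n m).length,
    y ((i : ℤ) - (negLen σ x n : ℤ)) = (segImg σ x n m).get ⟨i, h⟩

/-- `(x,k)` is a σ-representation of the two-sided sequence `y`, with `x ∈ X`. -/
def IsRepZ (σ : A → List B) (X : Set (ℤ → A)) (y : ℤ → B) (x : ℤ → A) (k : ℕ) : Prop :=
  x ∈ X ∧ k < (σ (x 0)).length ∧ ∃ z, TwoSidedImage σ x z ∧ ∀ n : ℤ, y n = z (n + k)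

/-- `σ` is recognizable on `X` at the two-sided point `y`. -/
def RecognizableAtZ (σ : A → List B) (X : Set (ℤ → A)) (y : ℤ → B) : Prop :=
  ∀ x k x' k', IsRepZ σ X y x k → IsRepZ σ X y x' k' → x = x' ∧ k = k'

/-- `σ` is recognizable on `X`. -/
def RecognizableZ (σ : A → List B) (X : Set (ℤ → A)) : Prop :=
  ∀ y : ℤ → B, RecognizableAtZ σ X y

/-- `(x,k)` is a σ-representation of the one-sided sequence `y`, with `x ∈ X`. -/
def IsRepN (σ : A → List B) (X : Set (ℕ → A)) (y : ℕ → B) (x : ℕ → A) (k : ℕ) : Prop :=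
  x ∈ X ∧ k < (σ (x 0)).length ∧ ∃ z, OneSidedImage σ x z ∧ ∀ n : ℕ, y n = z (n + k)

/-- `σ` is one-sided recognizable on `X` at `y`. -/
def RecognizableAtN (σ : A → List B) (X : Set (ℕ → A)) (y : ℕ → B) : Prop :=
  ∀ x k x' k', IsRepN σ X y x k → IsRepN σ X y x' k' → x = x' ∧ k = k'

/-- `σ` is one-sided recognizable on `X`. -/
def RecognizableN (σ : A → List B) (X : Set (ℕ → A)) : Prop :=
  ∀ y : ℕ → B, RecognizableAtN σ X y

/-- The set `C(x)` of cutting points of a two-sided sequence. -/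
def CutSet (σ : A → List B) (x : ℤ → A) : Set ℤ :=
  {m | ∃ n : ℕ, m = ((prefixImg σ (plusSeq x) n).length : ℤ)} ∪
  {m | ∃ n : ℕ, m = -((negLen σ x n : ℤ))}

/-- The set `C⁺(x)` of cutting points of a one-sided sequence. -/
def CutSetPlus (σ : A → List B) (x : ℕ → A) : Set ℕ :=
  {m | ∃ n : ℕ, m = (prefixImg σ x n).length}

/-- Recognizability in the sense of Mossé with scope `N` (two-sided windows). -/
def MosseRec (σ : A → List B) (x : ℤ → A) (y : ℤ → B) (N : ℕ) : Prop :=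
  ∀ i j : ℤ, (∀ d : ℤ, -(N : ℤ) ≤ d → d ≤ N → y (i + d) = y (j + d)) →
    (i ∈ CutSet σ x ↔ j ∈ CutSet σ x)

/-- One-sided recognizability in the sense of Mossé with scope `N`, for a two-sided point. -/
def MosseRecOne (σ : A → List B) (x : ℤ → A) (y : ℤ → B) (N : ℕ) : Prop :=
  ∀ i j : ℤ, (∀ d : ℕ, d < N → y (i + d) = y (j + d)) →
    (i ∈ CutSet σ x ↔ j ∈ CutSet σ x)

/-- One-sided recognizability in the sense of Mossé with scope `N`, for a one-sided point. -/
def MosseRecOneN (σ : A → List B) (x : ℕ → A) (y : ℕ → B) (N : ℕ) : Prop :=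
  ∀ i j : ℕ, (∀ d : ℕ, d < N → y (i + d) = y (j + d)) →
    (i ∈ CutSetPlus σ x ↔ j ∈ CutSetPlus σ x)

/-- The extension of `σ` to words. -/
def substWord (σ : A → List A) : List A → List A := fun w => wordImg σ w

/-- The `n`-th power of the endomorphism `σ`, as a map on letters. -/
def wordPow (σ : A → List A) (n : ℕ) : A → List A := fun a => (substWord σ)^[n] [a]

/-- `w` belongs to the language `L(σ)` of the endomorphism `σ`. -/
def InLangSigma (σ : A → List A) (w : List A) : Prop :=
  ∃ n : ℕ, ∃ a : A, w <:+: (substWord σ)^[n] [a]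

/-- The substitution shift `X(σ)`. -/
def Xsig (σ : A → List A) : Set (ℤ → A) :=
  {x | ∀ k : ℤ, ∀ n : ℕ, InLangSigma σ (List.ofFn fun i : Fin n => x (k + (i : ℤ)))}

/-- The (two-sided) orbit of a two-sided sequence under the shift. -/
def orbitZ (x : ℤ → A) : Set (ℤ → A) := {y | ∃ n : ℤ, ∀ i, y i = x (i + n)}

/-- The forward orbit of a one-sided sequence under the shift. -/
def orbitN (x : ℕ → A) : Set (ℕ → A) := {y | ∃ n : ℕ, ∀ i, y i = x (i + n)}

/-- A two-sided sequence is periodic. -/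
def PeriodicZ (x : ℤ → A) : Prop := ∃ n : ℕ, 1 ≤ n ∧ ∀ i, x (i + n) = x i

/-- A one-sided sequence is periodic. -/
def PeriodicN (x : ℕ → A) : Prop := ∃ n : ℕ, 1 ≤ n ∧ ∀ i, x (i + n) = x i

/-- Minimality of a two-sided shift space. -/
def MinimalZ [TopologicalSpace A] (X : Set (ℤ → A)) : Prop :=
  X.Nonempty ∧ ∀ x ∈ X, X ⊆ closure (orbitZ x)

/-- Minimality of a one-sided shift space. -/
def MinimalN [TopologicalSpace A] (X : Set (ℕ → A)) : Prop :=
  X.Nonempty ∧ ∀ x ∈ X, X ⊆ closure (orbitN x)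

/-- Prepend a letter to a one-sided sequence. -/
def consSeq (a : A) (x : ℕ → A) : ℕ → A := fun i => match i with
  | 0 => a
  | j + 1 => x j

/-- Prepend a word to a one-sided sequence. -/
def prependSeq (w : List A) (x : ℕ → A) : ℕ → A := fun i =>
  if h : i < w.length then w.get ⟨i, h⟩ else x (i - w.length)

/-- `u` is left-special in the one-sided shift `X`. -/
def LeftSpecial (X : Set (ℕ → A)) (u : ℕ → A) : Prop :=
  2 ≤ Nat.card {a : A // consSeq a u ∈ X}

/-- Two two-sided sequences are asymptotically equivalent. -/
def AsympEq (x y : ℤ → A) : Prop := ∃ n m : ℤ, ∀ i : ℕ, x (n + i) = y (m + i)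

/-- `C` is an asymptotic class of `X`. -/
def IsAsympClass (X : Set (ℤ → A)) (C : Set (ℤ → A)) : Prop :=
  ∃ x ∈ X, C = {y ∈ X | AsympEq x y}

/-- An asymptotic class is non-trivial if it is not reduced to a single orbit. -/
def NontrivialClass (C : Set (ℤ → A)) : Prop :=
  ∃ y ∈ C, ∃ z ∈ C, z ∉ orbitZ y

/-- The closure under the shift of `σ(X)`. -/
def imageShiftClosure [TopologicalSpace B] (σ : A → List B) (X : Set (ℤ → A)) :
    Set (ℤ → B) :=
  closure {y | ∃ x ∈ X, ∃ z, TwoSidedImage σ x z ∧ ∃ m : ℤ, ∀ i, y i = z (i + m)}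

/-! ### Auxiliary lemmas -/

section Aux

variable (σ : A → List B)

theorem wordImg_nil : wordImg σ ([] : List A) = [] := rfl

theorem wordImg_cons (a : A) (w : List A) : wordImg σ (a :: w) = σ a ++ wordImg σ w := by
  simp [wordImg]

theorem wordImg_append (u v : List A) :
    wordImg σ (u ++ v) = wordImg σ u ++ wordImg σ v := by
  simp [wordImg]

theorem wordImg_concat (w : List A) (a : A) :
    wordImg σ (w.concat a) = wordImg σ w ++ σ a := by
  simp [wordImg]

/-- Cumulative length of the image of the prefix of length `n`. -/
def Lp (x : ℕ → A) (n : ℕ) : ℕ := (prefixImg σ x n).length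

theorem prefixImg_zero (x : ℕ → A) : prefixImg σ x 0 = [] := rfl

theorem prefixImg_succ (x : ℕ → A) (n : ℕ) :
    prefixImg σ x (n + 1) = prefixImg σ x n ++ σ (x n) := by
  rw [prefixImg, List.ofFn_succ']
  rw [wordImg_concat]
  rfl

theorem Lp_succ (x : ℕ → A) (n : ℕ) :
    Lp σ x (n + 1) = Lp σ x n + (σ (x n)).length := by
  simp [Lp, prefixImg_succ]

theorem le_Lp (hne : ∀ a : A, σ a ≠ []) (x : ℕ → A) (n : ℕ) : n ≤ Lp σ x n := by
  induction n with
  | zero => exact Nat.zero_le _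
  | succ n ih =>
      rw [Lp_succ]
      have : 0 < (σ (x n)).length := List.length_pos_iff.mpr (hne (x n))
      omega

theorem Lp_mono (x : ℕ → A) {m n : ℕ} (h : m ≤ n) : Lp σ x m ≤ Lp σ x n := by
  induction n with
  | zero =>
      have : m = 0 := by omega
      subst this; exact le_refl _
  | succ n ih =>
      rcases Nat.lt_or_ge m (n+1) with h' | h'
      · have := ih (by omega)
        rw [Lp_succ]; omega
      · have : m = n + 1 := by omega
        subst this; exact le_refl _

theorem prefixImg_prefix (x : ℕ → A) {m n : ℕ} (h : m ≤ n) :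
    prefixImg σ x m <+: prefixImg σ x n := by
  induction n with
  | zero =>
      have : m = 0 := by omega
      subst this; exact List.prefix_refl _
  | succ n ih =>
      rcases Nat.lt_or_ge m (n+1) with h' | h'
      · exact (ih (by omega)).trans (by rw [prefixImg_succ]; exact List.prefix_append _ _)
      · have : m = n + 1 := by omega
        subst this; exact List.prefix_refl _

theorem prefixImg_getElem (x : ℕ → A) {m n i : ℕ} (h : m ≤ n) (hi : i < Lp σ x m)
    (hi' : i < (prefixImg σ x n).length) :
    (prefixImg σ x n)[i] = (prefixImg σ x m)[i] := by
  exact ((prefixImg_prefix σ x h).getElem hi).symm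

/-- The canonical one-sided image sequence. -/
def canonN (hne : ∀ a : A, σ a ≠ []) (x : ℕ → A) (i : ℕ) : B :=
  (prefixImg σ x (i + 1)).get ⟨i, lt_of_lt_of_le (Nat.lt_succ_self i) (le_Lp σ hne x (i + 1))⟩

theorem canonN_eq (hne : ∀ a : A, σ a ≠ []) (x : ℕ → A) {n i : ℕ} (hi : i < (prefixImg σ x n).length) :
    canonN σ hne x i = (prefixImg σ x n)[i] := by
  rcases Nat.le_total (i + 1) n with h | h
  · rw [canonN]
    simp only [List.get_eq_getElem]
    exact (prefixImg_getElem σ x h (lt_of_lt_of_le (Nat.lt_succ_self i) (le_Lp σ hne x (i+1))) hi).symm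
  · rw [canonN]
    simp only [List.get_eq_getElem]
    exact prefixImg_getElem σ x h hi _

theorem oneSidedImage_iff (hne : ∀ a : A, σ a ≠ []) (x : ℕ → A) (z : ℕ → B) :
    OneSidedImage σ x z ↔ z = canonN σ hne x := by
  constructor
  · intro ⟨_, h2⟩
    funext i
    have hi : i < (prefixImg σ x (i+1)).length :=
      lt_of_lt_of_le (Nat.lt_succ_self i) (le_Lp σ hne x (i + 1))
    rw [h2 (i+1) i hi, canonN_eq σ hne x hi]
    rfl
  · rintro rfl
    constructor
    · intro m; exact ⟨m, le_Lp σ hne x m⟩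
    · intro n i h
      simp only [List.get_eq_getElem]
      exact canonN_eq σ hne x h

/-- The word `σ(x_{[-n,0)})`. -/
def negWord (x : ℤ → A) (n : ℕ) : List B :=
  wordImg σ (List.ofFn fun i : Fin n => x ((i : ℤ) - (n : ℤ)))

theorem negLen_eq (x : ℤ → A) (n : ℕ) : negLen σ x n = (negWord σ x n).length := rfl

theorem negWord_succ (x : ℤ → A) (n : ℕ) :
    negWord σ x (n + 1) = σ (x (-((n : ℤ) + 1))) ++ negWord σ x n := by
  have h2 : (List.ofFn fun i : Fin n => x (((i.succ : Fin (n+1)) : ℤ) - ((n + 1 : ℕ) : ℤ)))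
      = List.ofFn fun i : Fin n => x ((i : ℤ) - (n : ℤ)) := by
    congr 1; funext i; congr 1; push_cast [Fin.val_succ]; ring
  rw [negWord, List.ofFn_succ, wordImg_cons, h2]
  rw [show (((0 : Fin (n+1)) : ℤ) - ((n + 1 : ℕ) : ℤ)) = -((n : ℤ) + 1) by simp]
  rfl

theorem negLen_succ (x : ℤ → A) (n : ℕ) :
    negLen σ x n + (σ (x (-((n : ℤ) + 1)))).length = negLen σ x (n + 1) := by
  rw [negLen_eq, negLen_eq, negWord_succ, List.length_append]
  omega

theorem le_negLen (hne : ∀ a : A, σ a ≠ []) (x : ℤ → A) (n : ℕ) : n ≤ negLen σ x n := by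
  induction n with
  | zero => exact Nat.zero_le _
  | succ n ih =>
      have h1 := negLen_succ σ x n
      have : 0 < (σ (x (-((n : ℤ) + 1)))).length := List.length_pos_iff.mpr (hne _)
      omega

theorem negWord_suffix (x : ℤ → A) {m n : ℕ} (h : m ≤ n) :
    ∃ w : List B, negWord σ x n = w ++ negWord σ x m ∧
      w.length + negLen σ x m = negLen σ x n := by
  induction n with
  | zero =>
      have : m = 0 := by omega
      subst this; exact ⟨[], by simp⟩
  | succ n ih =>
      rcases Nat.lt_or_ge m (n + 1) with h' | h'
      · obtain ⟨w, hw, hlen⟩ := ih (by omega)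
        refine ⟨σ (x (-((n : ℤ) + 1))) ++ w, ?_, ?_⟩
        · rw [negWord_succ, hw, List.append_assoc]
        · have := negLen_succ σ x n
          rw [List.length_append]; omega
      · have : m = n + 1 := by omega
        subst this; exact ⟨[], by simp⟩

theorem negLen_mono (x : ℤ → A) {m n : ℕ} (h : m ≤ n) : negLen σ x m ≤ negLen σ x n := by
  obtain ⟨w, _, hlen⟩ := negWord_suffix σ x h
  omega

theorem negWord_getElem? (x : ℤ → A) {m n : ℕ} (h : m ≤ n) {j : ℕ}
    (hj : j < negLen σ x m) :
    (negWord σ x n)[negLen σ x n - negLen σ x m + j]? = (negWord σ x m)[j]? := by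
  obtain ⟨w, hw, hlen⟩ := negWord_suffix σ x h
  rw [hw, List.getElem?_append_right (by omega)]
  congr 1
  omega

theorem segImg_split (x : ℤ → A) (n m : ℕ) :
    segImg σ x n m = negWord σ x n ++ prefixImg σ (plusSeq x) m := by
  have h1 : (List.ofFn fun j : Fin n => x ((((Fin.castLE (Nat.le_add_right n m) j) : Fin (n+m)) : ℤ) - (n : ℤ)))
      = List.ofFn fun i : Fin n => x ((i : ℤ) - (n : ℤ)) :=
    congrArg List.ofFn (funext fun i => by congr 1)
  have h2 : (List.ofFn fun j : Fin m => x ((((Fin.natAdd n j) : Fin (n+m)) : ℤ) - (n : ℤ)))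
      = List.ofFn fun i : Fin m => plusSeq x i :=
    congrArg List.ofFn (funext fun i => by
      show x _ = plusSeq x i
      rw [plusSeq]
      congr 1
      show ((Fin.natAdd n i : ℕ) : ℤ) - (n : ℤ) = ((i : ℕ) : ℤ)
      simp [Fin.natAdd])
  rw [segImg, List.ofFn_add, wordImg_append, negWord, prefixImg, h1, h2]

theorem segImg_length (x : ℤ → A) (n m : ℕ) :
    (segImg σ x n m).length = negLen σ x n + Lp σ (plusSeq x) m := by
  rw [segImg_split, List.length_append, negLen_eq, Lp]

/-- The canonical two-sided image sequence. -/
def canonZ (hne : ∀ a : A, σ a ≠ []) (x : ℤ → A) (s : ℤ) : B :=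
  if h : 0 ≤ s then canonN σ hne (plusSeq x) s.toNat
  else
    (negWord σ x (-s).toNat).get ⟨((negLen σ x (-s).toNat : ℤ) + s).toNat, by
      have h1 := le_negLen σ hne x (-s).toNat
      have h2 := negLen_eq σ x (-s).toNat
      omega⟩

theorem canonZ_nonneg (hne : ∀ a : A, σ a ≠ []) (x : ℤ → A) (j : ℕ) :
    canonZ σ hne x (j : ℤ) = canonN σ hne (plusSeq x) j := by
  rw [canonZ, dif_pos (by positivity)]
  norm_num

theorem canonZ_eq_get (hne : ∀ a : A, σ a ≠ []) (x : ℤ → A) (n m : ℕ) (i : ℕ)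
    (h : i < (segImg σ x n m).length) :
    canonZ σ hne x ((i : ℤ) - (negLen σ x n : ℤ)) = (segImg σ x n m).get ⟨i, h⟩ := by
  have hlen := segImg_length σ x n m
  have hsplit := segImg_split σ x n m
  simp only [List.get_eq_getElem]
  rw [List.getElem_of_eq hsplit h]
  have hNW : (negWord σ x n).length = negLen σ x n := (negLen_eq σ x n).symm
  rcases Nat.lt_or_ge i (negLen σ x n) with hi | hi
  · -- negative part
    rw [List.getElem_append_left (by omega)]
    rw [canonZ, dif_neg (by omega)]
    simp only [List.get_eq_getElem]
    -- abbreviations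
    set s : ℤ := (i : ℤ) - (negLen σ x n : ℤ) with hs
    have hn0 : (-s).toNat = negLen σ x n - i := by omega
    set n₀ : ℕ := (-s).toNat with hn0def
    have hM'ge : n₀ ≤ negLen σ x n₀ := le_negLen σ hne x n₀
    set M' : ℕ := negLen σ x n₀ with hM'
    have hj₀ : ((M' : ℤ) + s).toNat = M' - (negLen σ x n - i) := by omega
    set t : ℕ := max n n₀ with ht
    have h1 : negLen σ x n ≤ negLen σ x t := negLen_mono σ x (le_max_left _ _)
    have h2 : M' ≤ negLen σ x t := negLen_mono σ x (le_max_right _ _)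
    have e1 := negWord_getElem? σ x (le_max_right n n₀) (j := ((M' : ℤ) + s).toNat)
      (by omega)
    have e2 := negWord_getElem? σ x (le_max_left n n₀) (j := i) hi
    have hidx : negLen σ x t - M' + ((M' : ℤ) + s).toNat = negLen σ x t - negLen σ x n + i := by
      omega
    rw [hidx] at e1
    rw [e2] at e1
    -- e1 : (negWord σ x n₀)[((M':ℤ)+s).toNat]? = (negWord σ x n)[i]?  (reversed)
    have hb1 : ((M' : ℤ) + s).toNat < (negWord σ x n₀).length := by
      rw [← negLen_eq]; omega
    have hb2 : i < (negWord σ x n).length := by omega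
    rw [List.getElem?_eq_getElem hb1, List.getElem?_eq_getElem hb2] at e1
    exact Option.some.inj e1.symm
  · -- positive part
    rw [List.getElem_append_right (by omega)]
    rw [canonZ, dif_pos (by omega)]
    have hpl : (prefixImg σ (plusSeq x) m).length = Lp σ (plusSeq x) m := rfl
    have htn : ((i : ℤ) - (negLen σ x n : ℤ)).toNat = i - (negWord σ x n).length := by omega
    rw [htn]
    exact canonN_eq σ hne (plusSeq x) (by omega)

theorem twoSidedImage_canonZ (hne : ∀ a : A, σ a ≠ []) (x : ℤ → A) :
    TwoSidedImage σ x (canonZ σ hne x) := by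
  refine ⟨fun m => ⟨m, le_Lp σ hne _ m⟩, fun m => ⟨m, le_negLen σ hne x m⟩, ?_⟩
  intro n m i h
  exact canonZ_eq_get σ hne x n m i h

theorem twoSidedImage_unique (x : ℤ → A) {z z' : ℤ → B}
    (h : TwoSidedImage σ x z) (h' : TwoSidedImage σ x z') : z = z' := by
  funext s
  obtain ⟨n, hn⟩ := h.2.1 (s.natAbs + 1)
  obtain ⟨m, hm⟩ := h.1 (s.natAbs + 1)
  have hlen := segImg_length σ x n m
  have hpl : (prefixImg σ (plusSeq x) m).length = Lp σ (plusSeq x) m := rfl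
  have hi : ((s + (negLen σ x n : ℤ)).toNat) < (segImg σ x n m).length := by omega
  have h3 := h.2.2 n m _ hi
  have h4 := h'.2.2 n m _ hi
  have he : (((s + (negLen σ x n : ℤ)).toNat : ℤ)) - (negLen σ x n : ℤ) = s := by omega
  rw [he] at h3 h4
  rw [h3, h4]

theorem twoSidedImage_eq_canonZ (hne : ∀ a : A, σ a ≠ []) {x : ℤ → A} {z : ℤ → B}
    (h : TwoSidedImage σ x z) : z = canonZ σ hne x :=
  twoSidedImage_unique σ x h (twoSidedImage_canonZ σ hne x)

theorem prefixImg_getElem? (x : ℕ → A) {m n i : ℕ} (h : m ≤ n) (hi : i < Lp σ x m) :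
    (prefixImg σ x n)[i]? = (prefixImg σ x m)[i]? := by
  have h1 : i < (prefixImg σ x m).length := hi
  have h2 : i < (prefixImg σ x n).length := lt_of_lt_of_le hi (Lp_mono σ x h)
  rw [List.getElem?_eq_getElem h1, List.getElem?_eq_getElem h2,
    prefixImg_getElem σ x h hi h2]
  rfl

theorem twoSidedImage_mono (x : ℤ → A) (z : ℤ → B) {n n' m m' : ℕ} (hn : n ≤ n')
    (hm : m ≤ m')
    (H : ∀ i (h : i < (segImg σ x n' m').length),
      z ((i : ℤ) - (negLen σ x n' : ℤ)) = (segImg σ x n' m').get ⟨i, h⟩) :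
    ∀ i (h : i < (segImg σ x n m).length),
      z ((i : ℤ) - (negLen σ x n : ℤ)) = (segImg σ x n m).get ⟨i, h⟩ := by
  intro i h
  obtain ⟨w, hw, hwlen⟩ := negWord_suffix σ x hn
  have hpl : (prefixImg σ (plusSeq x) m).length = Lp σ (plusSeq x) m := rfl
  have hpl' : (prefixImg σ (plusSeq x) m').length = Lp σ (plusSeq x) m' := rfl
  have hNW : (negWord σ x n).length = negLen σ x n := (negLen_eq σ x n).symm
  have hlen := segImg_length σ x n m
  have hlen' := segImg_length σ x n' m'
  have hLp := Lp_mono σ (plusSeq x) hm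
  set i' := negLen σ x n' - negLen σ x n + i with hi'
  have hib : i' < (segImg σ x n' m').length := by omega
  have h1 := H i' hib
  have key : (segImg σ x n' m')[i']? = (segImg σ x n m)[i]? := by
    rw [segImg_split σ x n' m', segImg_split σ x n m, hw, List.append_assoc,
      List.getElem?_append_right (show w.length ≤ i' by omega)]
    have he : i' - w.length = i := by omega
    rw [he]
    rcases Nat.lt_or_ge i (negLen σ x n) with hc | hc
    · rw [List.getElem?_append_left (by omega), List.getElem?_append_left (by omega)]
    · rw [List.getElem?_append_right (by omega), List.getElem?_append_right (by omega)]
      rw [hNW]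
      exact prefixImg_getElem? σ (plusSeq x) hm (by omega)
  have hb1 : i' < (segImg σ x n' m').length := hib
  rw [List.getElem?_eq_getElem hb1, List.getElem?_eq_getElem h] at key
  have hki := Option.some.inj key
  simp only [List.get_eq_getElem] at h1 ⊢
  rw [← hki, ← h1]
  congr 1
  omega

theorem shiftZ_iterate (x : ℤ → A) (m : ℕ) (j : ℤ) : (shiftZ^[m] x) j = x (j + m) := by
  induction m generalizing x j with
  | zero => simp
  | succ m ih =>
      rw [Function.iterate_succ_apply, ih]
      show x (j + m + 1) = _
      congr 1
      push_cast
      ring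

theorem plusSeq_shiftZ (x : ℤ → A) : plusSeq (shiftZ x) = shiftN (plusSeq x) := by
  funext i
  show x ((i : ℤ) + 1) = x ((i + 1 : ℕ) : ℤ)
  exact congrArg x (by push_cast; ring)

theorem prefixImg_cons (x : ℕ → A) (m : ℕ) :
    prefixImg σ x (m + 1) = σ (x 0) ++ prefixImg σ (shiftN x) m := by
  have h1 : (List.ofFn fun i : Fin m => x ((i.succ : Fin (m+1)) : ℕ))
      = List.ofFn fun i : Fin m => shiftN x i :=
    congrArg List.ofFn (funext fun i => by rw [shiftN]; congr 1)
  have h0 : ((0 : Fin (m+1)) : ℕ) = 0 := by simp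
  rw [prefixImg, List.ofFn_succ, wordImg_cons, h1, h0]
  rfl

theorem negWord_shift (x : ℤ → A) (n : ℕ) :
    negWord σ (shiftZ x) (n + 1) = negWord σ x n ++ σ (x 0) := by
  have h1 : (List.ofFn fun i : Fin n => shiftZ x (((i.castSucc : Fin (n+1)) : ℤ) - ((n+1 : ℕ) : ℤ)))
      = List.ofFn fun i : Fin n => x ((i : ℤ) - (n : ℤ)) :=
    congrArg List.ofFn (funext fun i => by
      rw [shiftZ]
      congr 1
      push_cast [Fin.coe_castSucc]
      ring)
  have h2 : shiftZ x (((Fin.last n : Fin (n+1)) : ℤ) - ((n+1 : ℕ) : ℤ)) = x 0 := by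
    rw [shiftZ]
    congr 1
    push_cast [Fin.val_last]
    ring
  rw [negWord, List.ofFn_succ', wordImg_concat, h1, h2]
  rfl

theorem segImg_shift (x : ℤ → A) (n m : ℕ) :
    segImg σ (shiftZ x) (n + 1) m = segImg σ x n (m + 1) := by
  have hp0 : plusSeq x 0 = x 0 := by rw [plusSeq]; norm_num
  rw [segImg_split, segImg_split, negWord_shift, plusSeq_shiftZ,
    prefixImg_cons σ (plusSeq x) m, hp0, List.append_assoc]

theorem negLen_shift (x : ℤ → A) (n : ℕ) :
    negLen σ (shiftZ x) (n + 1) = negLen σ x n + (σ (x 0)).length := by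
  rw [negLen_eq, negWord_shift, List.length_append, negLen_eq]

theorem canonZ_shift (hne : ∀ a : A, σ a ≠ []) (x : ℤ → A) (s : ℤ) :
    canonZ σ hne (shiftZ x) s = canonZ σ hne x (s + (σ (x 0)).length) := by
  have key : TwoSidedImage σ (shiftZ x)
      (fun s => canonZ σ hne x (s + (σ (x 0)).length)) := by
    refine ⟨fun m => ⟨m, le_Lp σ hne _ m⟩, fun m => ⟨m, le_negLen σ hne _ m⟩, ?_⟩
    intro n m i h
    refine twoSidedImage_mono σ (shiftZ x)
      (fun s => canonZ σ hne x (s + ((σ (x 0)).length : ℤ))) (Nat.le_succ n) (le_refl m) ?_ i h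
    intro i h
    have hseg := segImg_shift σ x n m
    have hb : i < (segImg σ x n (m+1)).length := by rw [← hseg]; exact h
    have := canonZ_eq_get σ hne x n (m+1) i hb
    have hnl := negLen_shift σ x n
    simp only [List.get_eq_getElem] at this ⊢
    rw [List.getElem_of_eq hseg h]
    rw [← this]
    congr 1
    rw [hnl]
    push_cast
    ring
  have h2 := twoSidedImage_eq_canonZ σ hne key
  exact (congrFun h2.symm s).symm ▸ (congrFun h2 s).symm

theorem canonZ_shift_iter (hne : ∀ a : A, σ a ≠ []) (x : ℤ → A) (m : ℕ) (s : ℤ) :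
    canonZ σ hne (shiftZ^[m] x) s = canonZ σ hne x (s + (Lp σ (plusSeq x) m : ℤ)) := by
  induction m generalizing s with
  | zero =>
      show canonZ σ hne x s = _
      congr 1
      have : Lp σ (plusSeq x) 0 = 0 := rfl
      omega
  | succ m ih =>
      rw [Function.iterate_succ_apply', canonZ_shift σ hne (shiftZ^[m] x) s]
      rw [ih]
      congr 1
      have h0 : (shiftZ^[m] x) 0 = x (m : ℤ) := by rw [shiftZ_iterate]; norm_num
      have hLp : Lp σ (plusSeq x) (m + 1) = Lp σ (plusSeq x) m + (σ (plusSeq x m)).length :=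
        Lp_succ σ (plusSeq x) m
      rw [h0]
      have : plusSeq x m = x (m : ℤ) := rfl
      rw [← this, hLp]
      push_cast
      ring

theorem shiftZ_mem (X : Set (ℤ → A)) [TopologicalSpace A] (hX : IsShiftZ X) {x : ℤ → A}
    (hx : x ∈ X) (m : ℕ) : shiftZ^[m] x ∈ X := by
  induction m with
  | zero => exact hx
  | succ m ih =>
      rw [Function.iterate_succ_apply']
      rw [← hX.2]
      exact ⟨_, ih, rfl⟩

theorem isOpen_window [TopologicalSpace A] [DiscreteTopology A] (R : ℕ) (u : ℤ → A) :
    IsOpen {v : ℤ → A | ∀ s : ℤ, s.natAbs ≤ R → v s = u s} := by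
  have he : {v : ℤ → A | ∀ s : ℤ, s.natAbs ≤ R → v s = u s}
      = ⋂ s ∈ Finset.Icc (-(R : ℤ)) (R : ℤ), (fun v : ℤ → A => v s) ⁻¹' {u s} := by
    ext v
    simp only [Set.mem_setOf_eq, Set.mem_iInter, Set.mem_preimage, Set.mem_singleton_iff,
      Finset.mem_Icc]
    constructor
    · intro h s hs
      exact h s (by omega)
    · intro h s hs
      exact h s (by omega)
  rw [he]
  exact isOpen_biInter_finset fun s _ =>
    (continuous_apply s).isOpen_preimage _ (isOpen_discrete _)

theorem canonZ_congr (hne : ∀ a : A, σ a ≠ []) {u v : ℤ → A} (s : ℤ)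
    (h : ∀ j : ℤ, j.natAbs ≤ s.natAbs + 1 → u j = v j) :
    canonZ σ hne u s = canonZ σ hne v s := by
  set n : ℕ := s.natAbs + 1 with hn
  have hfun : (fun i : Fin (n + n) => u ((i : ℤ) - (n : ℤ)))
      = fun i : Fin (n + n) => v ((i : ℤ) - (n : ℤ)) :=
    funext fun i => h _ (by have := i.isLt; omega)
  have hseg : segImg σ u n n = segImg σ v n n := by
    simp only [segImg]
    rw [hfun]
  have hnegfun : (fun i : Fin n => u ((i : ℤ) - (n : ℤ)))
      = fun i : Fin n => v ((i : ℤ) - (n : ℤ)) :=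
    funext fun i => h _ (by have := i.isLt; omega)
  have hneg : negWord σ u n = negWord σ v n := by
    simp only [negWord]
    rw [hnegfun]
  have hnegLen : negLen σ u n = negLen σ v n := by
    rw [negLen_eq, negLen_eq, hneg]
  have h1 := le_negLen σ hne u n
  have h2 := le_Lp σ hne (plusSeq u) n
  have hlen := segImg_length σ u n n
  have hlen' := segImg_length σ v n n
  have hpu : plusSeq u n = plusSeq u n := rfl
  have hb : (s + (negLen σ u n : ℤ)).toNat < (segImg σ u n n).length := by omega
  have hb' : (s + (negLen σ u n : ℤ)).toNat < (segImg σ v n n).length := by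
    rw [← hseg]; exact hb
  have e1 := canonZ_eq_get σ hne u n n (s + (negLen σ u n : ℤ)).toNat hb
  have e2 := canonZ_eq_get σ hne v n n (s + (negLen σ u n : ℤ)).toNat hb'
  rw [show (((s + (negLen σ u n : ℤ)).toNat : ℤ)) - (negLen σ u n : ℤ) = s by omega] at e1
  rw [show (((s + (negLen σ u n : ℤ)).toNat : ℤ)) - (negLen σ v n : ℤ) = s by omega] at e2
  rw [e1, e2]
  simp only [List.get_eq_getElem]
  exact List.getElem_of_eq hseg _

theorem exists_dec (hne : ∀ a : A, σ a ≠ []) (x : ℕ → A) (k p : ℕ) :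
    ∃ m o : ℕ, o < (σ (x m)).length ∧ Lp σ x m + o = p + k := by
  classical
  set P : ℕ → Prop := fun m => Lp σ x m ≤ p + k with hP
  have hP0 : P 0 := by
    show Lp σ x 0 ≤ p + k
    show (prefixImg σ x 0).length ≤ p + k
    rw [prefixImg_zero]
    exact Nat.zero_le _
  set m := Nat.findGreatest P (p + k) with hmdef
  have hm : P m := Nat.findGreatest_spec (Nat.zero_le _) hP0
  have hm1 : ¬ P (m + 1) := by
    rcases Nat.lt_or_ge (p + k) (m + 1) with hh | hh
    · intro hPm
      have h1 : Lp σ x (m + 1) ≤ p + k := hPm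
      have := le_Lp σ hne x (m + 1)
      omega
    · exact Nat.findGreatest_is_greatest (Nat.lt_succ_self m) hh
  have hms : Lp σ x m ≤ p + k := hm
  have hms1 : ¬ (Lp σ x (m + 1) ≤ p + k) := hm1
  have hLs := Lp_succ σ x m
  exact ⟨m, p + k - Lp σ x m, by omega, by omega⟩

theorem last_letter (hne : ∀ a : A, σ a ≠ []) (x : ℤ → A) (t : ℕ) :
    (σ (plusSeq x t)).getLast?
      = some (canonZ σ hne x ((Lp σ (plusSeq x) (t + 1) : ℤ) - 1)) := by
  have hpos : 0 < (σ (plusSeq x t)).length := List.length_pos_iff.mpr (hne _)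
  have hL := Lp_succ σ (plusSeq x) t
  have hpl : (prefixImg σ (plusSeq x) (t + 1)).length = Lp σ (plusSeq x) (t + 1) := rfl
  have hpl' : (prefixImg σ (plusSeq x) t).length = Lp σ (plusSeq x) t := rfl
  have hlt : Lp σ (plusSeq x) (t + 1) - 1 < (prefixImg σ (plusSeq x) (t + 1)).length := by
    omega
  have harg : ((Lp σ (plusSeq x) (t + 1) - 1 : ℕ) : ℤ) = (Lp σ (plusSeq x) (t + 1) : ℤ) - 1 := by
    omega
  rw [← harg, canonZ_nonneg σ hne x, canonN_eq σ hne (plusSeq x) hlt]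
  have hsp := prefixImg_succ σ (plusSeq x) t
  rw [List.getLast?_eq_getElem?,
      List.getElem?_eq_getElem (show (σ (plusSeq x t)).length - 1 < (σ (plusSeq x t)).length by omega)]
  congr 1
  rw [List.getElem_of_eq hsp, List.getElem_append_right (by omega)]
  congr 1
  omega

end Aux

/-- if `σ` is non-erasing, right-marked and recognizable on `X`,
then it is one-sided recognizable on `X⁺`. -/
theorem stmt8 {A B : Type*} [Fintype A] [TopologicalSpace A] [DiscreteTopology A]
    (σ : A → List B) (X : Set (ℤ → A)) (hX : IsShiftZ X)
    (hne : ∀ a : A, σ a ≠ [])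
    (hrm : ∀ a b : A, (σ a).getLast? = (σ b).getLast? → a = b)
    (hrec : RecognizableZ σ X) :
    RecognizableN σ (SetPlus X) := by
  intro y x₁ k₁ x₂ k₂ h₁ h₂
  obtain ⟨hx₁, hk₁, z₁, hz₁, hy₁⟩ := h₁
  obtain ⟨hx₂, hk₂, z₂, hz₂, hy₂⟩ := h₂
  obtain ⟨xb₁, hxb₁X, hpx₁⟩ := hx₁
  obtain ⟨xb₂, hxb₂X, hpx₂⟩ := hx₂
  subst hpx₁
  subst hpx₂
  set Z₁ := canonZ σ hne xb₁ with hZ₁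
  set Z₂ := canonZ σ hne xb₂ with hZ₂
  have hz₁' : z₁ = canonN σ hne (plusSeq xb₁) := (oneSidedImage_iff σ hne _ _).mp hz₁
  have hz₂' : z₂ = canonN σ hne (plusSeq xb₂) := (oneSidedImage_iff σ hne _ _).mp hz₂
  have hyz₁ : ∀ n : ℕ, y n = Z₁ ((n : ℤ) + (k₁ : ℤ)) := by
    intro n
    rw [hy₁ n, hz₁', show ((n : ℤ) + (k₁ : ℤ)) = ((n + k₁ : ℕ) : ℤ) by push_cast; ring,
      hZ₁, canonZ_nonneg]
  have hyz₂ : ∀ n : ℕ, y n = Z₂ ((n : ℤ) + (k₂ : ℤ)) := by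
    intro n
    rw [hy₂ n, hz₂', show ((n : ℤ) + (k₂ : ℤ)) = ((n + k₂ : ℕ) : ℤ) by push_cast; ring,
      hZ₂, canonZ_nonneg]
  have hyy : ∀ s : ℤ, 0 ≤ s → Z₁ (s + k₁) = Z₂ (s + k₂) := by
    intro s hs
    have e1 := hyz₁ s.toNat
    have e2 := hyz₂ s.toNat
    rw [show ((s.toNat : ℤ)) = s by omega] at e1 e2
    rw [← e1, ← e2]
  -- The KEY claim : far to the right, the two decompositions agree.
  have KEY : ∃ M : ℕ, ∀ (m m' o o' : ℕ), o < (σ (plusSeq xb₁ m)).length →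
      o' < (σ (plusSeq xb₂ m')).length →
      (Lp σ (plusSeq xb₁) m : ℤ) - k₁ + o = (Lp σ (plusSeq xb₂) m' : ℤ) - k₂ + o' →
      (M : ℤ) ≤ (Lp σ (plusSeq xb₁) m : ℤ) - k₁ + o →
      o = o' ∧ plusSeq xb₁ m = plusSeq xb₂ m' := by
    by_contra hcon
    push_neg at hcon
    choose mf m'f of o'f hc1 hc2 hc3 hc4 hc5 using hcon
    set K := (Finset.univ.sup fun a : A => (σ a).length) + 1 with hK
    have hKlt : ∀ a : A, (σ a).length < K :=
      fun a => Nat.lt_succ_of_le (Finset.le_sup (f := fun a : A => (σ a).length) (Finset.mem_univ a))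
    set wv : ℕ → Fin K × Fin K × A × A := fun j =>
      (⟨of j, lt_trans (hc1 j) (hKlt _)⟩, ⟨o'f j, lt_trans (hc2 j) (hKlt _)⟩,
        plusSeq xb₁ (mf j), plusSeq xb₂ (m'f j)) with hwv
    obtain ⟨v₀, hv₀⟩ := Finite.exists_infinite_fiber wv
    have hS : (wv ⁻¹' {v₀}).Infinite := Set.infinite_coe_iff.mp hv₀
    set S := wv ⁻¹' {v₀} with hSdef
    obtain ⟨j₀, hj₀S⟩ := hS.nonempty
    set F : Filter ℕ := Filter.atTop ⊓ Filter.principal S with hF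
    have hFne : F.NeBot := Filter.frequently_iff_neBot.mp
      (Nat.frequently_atTop_iff_infinite.mpr hS)
    set g : ℕ → (ℤ → A) × (ℤ → A) :=
      fun j => (shiftZ^[mf j] xb₁, shiftZ^[m'f j] xb₂) with hg
    haveI : CompactSpace A := Finite.compactSpace
    obtain ⟨u, hu⟩ := exists_clusterPt_of_compactSpace (Filter.map g F)
    -- selection of good indices
    have hsel : ∀ R J : ℕ, ∃ j, J ≤ j ∧ j ∈ S ∧
        (∀ s : ℤ, s.natAbs ≤ R → (shiftZ^[mf j] xb₁) s = u.1 s) ∧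
        (∀ s : ℤ, s.natAbs ≤ R → (shiftZ^[m'f j] xb₂) s = u.2 s) := by
      intro R J
      have hU : ({v : ℤ → A | ∀ s : ℤ, s.natAbs ≤ R → v s = u.1 s} ×ˢ
          {v : ℤ → A | ∀ s : ℤ, s.natAbs ≤ R → v s = u.2 s}) ∈ nhds u :=
        ((isOpen_window R u.1).prod (isOpen_window R u.2)).mem_nhds
          ⟨fun s _ => rfl, fun s _ => rfl⟩
      have hV : g '' (S ∩ {j | J ≤ j}) ∈ Filter.map g F := by
        apply Filter.image_mem_map
        exact Filter.inter_mem (Filter.mem_inf_of_right (Filter.mem_principal_self S))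
          (Filter.mem_inf_of_left (Filter.Ici_mem_atTop J))
      obtain ⟨p, hpU, hpV⟩ := clusterPt_iff_nonempty.mp hu hU hV
      obtain ⟨j, ⟨hjS, hjJ⟩, rfl⟩ := hpV
      exact ⟨j, hjJ, hjS, fun s hs => hpU.1 s hs, fun s hs => hpU.2 s hs⟩
    -- the cluster point lies in X × X
    have h1X : u.1 ∈ X := by
      rw [← hX.1.closure_eq]
      rw [mem_closure_iff]
      intro O hO huO
      have hU : (O ×ˢ (Set.univ : Set (ℤ → A))) ∈ nhds u :=
        (hO.prod isOpen_univ).mem_nhds ⟨huO, trivial⟩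
      have hV : g '' S ∈ Filter.map g F :=
        Filter.image_mem_map (Filter.mem_inf_of_right (Filter.mem_principal_self S))
      obtain ⟨p, hpU, hpV⟩ := clusterPt_iff_nonempty.mp hu hU hV
      obtain ⟨j, hjS, rfl⟩ := hpV
      exact ⟨(g j).1, hpU.1, shiftZ_mem X hX hxb₁X (mf j)⟩
    have h2X : u.2 ∈ X := by
      rw [← hX.1.closure_eq]
      rw [mem_closure_iff]
      intro O hO huO
      have hU : ((Set.univ : Set (ℤ → A)) ×ˢ O) ∈ nhds u :=
        (isOpen_univ.prod hO).mem_nhds ⟨trivial, huO⟩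
      have hV : g '' S ∈ Filter.map g F :=
        Filter.image_mem_map (Filter.mem_inf_of_right (Filter.mem_principal_self S))
      obtain ⟨p, hpU, hpV⟩ := clusterPt_iff_nonempty.mp hu hU hV
      obtain ⟨j, hjS, rfl⟩ := hpV
      exact ⟨(g j).2, hpU.2, shiftZ_mem X hX hxb₂X (m'f j)⟩
    -- constancy of the data on S
    have hSc : ∀ j ∈ S, of j = (v₀.1 : ℕ) ∧ o'f j = (v₀.2.1 : ℕ) ∧
        plusSeq xb₁ (mf j) = v₀.2.2.1 ∧ plusSeq xb₂ (m'f j) = v₀.2.2.2 := by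
      intro j hj
      have hj' : wv j = v₀ := hj
      refine ⟨?_, ?_, ?_, ?_⟩
      · exact congrArg (fun t : Fin K × Fin K × A × A => (t.1 : ℕ)) hj'
      · exact congrArg (fun t : Fin K × Fin K × A × A => (t.2.1 : ℕ)) hj'
      · exact congrArg (fun t : Fin K × Fin K × A × A => t.2.2.1) hj'
      · exact congrArg (fun t : Fin K × Fin K × A × A => t.2.2.2) hj'
    -- the letters at the cluster point
    have ha₁ : u.1 0 = v₀.2.2.1 := by
      obtain ⟨j, _, hjS, hw1, _⟩ := hsel 0 0
      rw [← hw1 0 (by norm_num), shiftZ_iterate, ← (hSc j hjS).2.2.1]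
      show xb₁ (0 + (mf j : ℤ)) = xb₁ ((mf j : ℕ) : ℤ)
      exact congrArg xb₁ (by ring)
    have ha₂ : u.2 0 = v₀.2.2.2 := by
      obtain ⟨j, _, hjS, _, hw2⟩ := hsel 0 0
      rw [← hw2 0 (by norm_num), shiftZ_iterate, ← (hSc j hjS).2.2.2]
      show xb₂ (0 + (m'f j : ℤ)) = xb₂ ((m'f j : ℕ) : ℤ)
      exact congrArg xb₂ (by ring)
    -- the two limit representations have equal images
    have hteq : ∀ t : ℤ, canonZ σ hne u.1 (t + ((v₀.1 : ℕ) : ℤ))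
        = canonZ σ hne u.2 (t + ((v₀.2.1 : ℕ) : ℤ)) := by
      intro t
      set s₁ : ℤ := t + ((v₀.1 : ℕ) : ℤ) with hs₁
      set s₂ : ℤ := t + ((v₀.2.1 : ℕ) : ℤ) with hs₂
      set R : ℕ := max (s₁.natAbs + 1) (s₂.natAbs + 1) with hR
      obtain ⟨j, hjJ, hjS, hw1, hw2⟩ := hsel R t.natAbs
      obtain ⟨ho, ho', ha, ha'⟩ := hSc j hjS
      have hpj := hc4 j
      have hpeq := hc3 j
      -- left side
      have e1 : canonZ σ hne u.1 s₁ = canonZ σ hne (shiftZ^[mf j] xb₁) s₁ :=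
        canonZ_congr σ hne s₁ (fun s hs => (hw1 s (by omega)).symm)
      have e2 : canonZ σ hne u.2 s₂ = canonZ σ hne (shiftZ^[m'f j] xb₂) s₂ :=
        canonZ_congr σ hne s₂ (fun s hs => (hw2 s (by omega)).symm)
      rw [e1, e2, canonZ_shift_iter σ hne xb₁ (mf j) s₁, canonZ_shift_iter σ hne xb₂ (m'f j) s₂]
      rw [← hZ₁, ← hZ₂]
      set p : ℤ := (Lp σ (plusSeq xb₁) (mf j) : ℤ) - k₁ + of j with hp
      have harg1 : s₁ + (Lp σ (plusSeq xb₁) (mf j) : ℤ) = (t + p) + k₁ := by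
        rw [hs₁, hp, ho]; ring
      have harg2 : s₂ + (Lp σ (plusSeq xb₂) (m'f j) : ℤ) = (t + p) + k₂ := by
        rw [hs₂, hp]
        have h3 := hc3 j
        omega
      rw [harg1, harg2]
      exact hyy (t + p) (by omega)
    -- assemble the two representations of the same two-sided point
    obtain ⟨hoj₀, ho'j₀, haj₀, ha'j₀⟩ := hSc j₀ hj₀S
    have hrep1 : IsRepZ σ X (fun t => canonZ σ hne u.1 (t + ((v₀.1 : ℕ) : ℤ))) u.1 (v₀.1 : ℕ) := by
      refine ⟨h1X, ?_, canonZ σ hne u.1, twoSidedImage_canonZ σ hne u.1, fun n => rfl⟩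
      rw [ha₁, ← haj₀, ← hoj₀]
      exact hc1 j₀
    have hrep2 : IsRepZ σ X (fun t => canonZ σ hne u.1 (t + ((v₀.1 : ℕ) : ℤ))) u.2 (v₀.2.1 : ℕ) := by
      refine ⟨h2X, ?_, canonZ σ hne u.2, twoSidedImage_canonZ σ hne u.2, fun n => hteq n⟩
      rw [ha₂, ← ha'j₀, ← ho'j₀]
      exact hc2 j₀
    obtain ⟨hueq, hkeq⟩ := hrec _ u.1 (v₀.1 : ℕ) u.2 (v₀.2.1 : ℕ) hrep1 hrep2
    refine hc5 j₀ (by rw [hoj₀, ho'j₀, hkeq]) ?_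
    rw [haj₀, ha'j₀, ← ha₁, ← ha₂, hueq]
  obtain ⟨M, hM⟩ := KEY
  have hL10 : Lp σ (plusSeq xb₁) 0 = 0 := by
    show (prefixImg σ (plusSeq xb₁) 0).length = 0
    rw [prefixImg_zero]
    rfl
  have hL20 : Lp σ (plusSeq xb₂) 0 = 0 := by
    show (prefixImg σ (plusSeq xb₂) 0).length = 0
    rw [prefixImg_zero]
    rfl
  have hk₁' : k₁ < Lp σ (plusSeq xb₁) 1 := by
    have hs := Lp_succ σ (plusSeq xb₁) 0
    rw [show (0 : ℕ) + 1 = 1 from rfl] at hs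
    omega
  have hk₂' : k₂ < Lp σ (plusSeq xb₂) 1 := by
    have hs := Lp_succ σ (plusSeq xb₂) 0
    rw [show (0 : ℕ) + 1 = 1 from rfl] at hs
    omega
  -- synchronization point
  set m₀ : ℕ := M + k₁ with hm₀
  have hLm₀ : M + k₁ ≤ Lp σ (plusSeq xb₁) m₀ := le_Lp σ hne _ m₀
  obtain ⟨m₀'', o₀', hdo, hdeq⟩ := exists_dec σ hne (plusSeq xb₂) k₂ (Lp σ (plusSeq xb₁) m₀ - k₁)
  have hsync0 := hM m₀ m₀'' 0 o₀' (List.length_pos_iff.mpr (hne _)) hdo (by omega) (by omega)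
  have hceq₀ : Lp σ (plusSeq xb₁) m₀ + k₂ = Lp σ (plusSeq xb₂) m₀'' + k₁ := by
    have h5 := hsync0.1
    omega
  -- the tails of the two decompositions agree
  have tail : ∀ j : ℕ, plusSeq xb₁ (m₀ + j) = plusSeq xb₂ (m₀'' + j) ∧
      Lp σ (plusSeq xb₁) (m₀ + j) + k₂ = Lp σ (plusSeq xb₂) (m₀'' + j) + k₁ := by
    intro j
    induction j with
    | zero =>
        constructor
        · have := hM m₀ m₀'' 0 0 (List.length_pos_iff.mpr (hne _)) (List.length_pos_iff.mpr (hne _))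
            (by omega) (by omega)
          rw [Nat.add_zero, Nat.add_zero]
          exact this.2
        · rw [Nat.add_zero, Nat.add_zero]
          exact hceq₀
    | succ j ih =>
        obtain ⟨hletj, hcj⟩ := ih
        show plusSeq xb₁ (m₀ + j + 1) = plusSeq xb₂ (m₀'' + j + 1) ∧
          Lp σ (plusSeq xb₁) (m₀ + j + 1) + k₂ = Lp σ (plusSeq xb₂) (m₀'' + j + 1) + k₁
        have e1 := Lp_succ σ (plusSeq xb₁) (m₀ + j)
        have e2 := Lp_succ σ (plusSeq xb₂) (m₀'' + j)
        rw [hletj] at e1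
        have hlen : Lp σ (plusSeq xb₁) (m₀ + j + 1) + k₂ = Lp σ (plusSeq xb₂) (m₀'' + j + 1) + k₁ := by omega
        have hmono1 : Lp σ (plusSeq xb₁) m₀ ≤ Lp σ (plusSeq xb₁) (m₀ + j + 1) := Lp_mono σ _ (by omega)
        have hlets := hM (m₀ + j + 1) (m₀'' + j + 1) 0 0 (List.length_pos_iff.mpr (hne _))
          (List.length_pos_iff.mpr (hne _)) (by omega) (by omega)
        exact ⟨hlets.2, hlen⟩
  -- decode the heads of the decompositions from right to left
  have head : ∀ j : ℕ, j ≤ m₀ → j ≤ m₀'' →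
      (Lp σ (plusSeq xb₁) (m₀ - j) + k₂ = Lp σ (plusSeq xb₂) (m₀'' - j) + k₁) ∧
      ∀ i : ℕ, i < j → plusSeq xb₁ (m₀ - j + i) = plusSeq xb₂ (m₀'' - j + i) := by
    intro j
    induction j with
    | zero =>
        intro _ _
        refine ⟨?_, fun i hi => absurd hi (by omega)⟩
        rw [Nat.sub_zero, Nat.sub_zero]
        exact hceq₀
    | succ j ih =>
        intro hj1 hj2
        obtain ⟨hc, hl⟩ := ih (by omega) (by omega)
        set t₁ := m₀ - j with ht₁
        set t₂ := m₀'' - j with ht₂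
        have ht₁1 : 1 ≤ t₁ := by omega
        have ht₂1 : 1 ≤ t₂ := by omega
        have hq1 : k₁ < Lp σ (plusSeq xb₁) t₁ := lt_of_lt_of_le hk₁' (Lp_mono σ _ ht₁1)
        have hq2 : k₂ < Lp σ (plusSeq xb₂) t₂ := lt_of_lt_of_le hk₂' (Lp_mono σ _ ht₂1)
        have hl₁ := last_letter σ hne xb₁ (t₁ - 1)
        have hl₂ := last_letter σ hne xb₂ (t₂ - 1)
        rw [show t₁ - 1 + 1 = t₁ by omega] at hl₁
        rw [show t₂ - 1 + 1 = t₂ by omega] at hl₂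
        have hvv : Z₁ ((Lp σ (plusSeq xb₁) t₁ : ℤ) - 1) = Z₂ ((Lp σ (plusSeq xb₂) t₂ : ℤ) - 1) := by
          have hv := hyy ((Lp σ (plusSeq xb₁) t₁ : ℤ) - 1 - k₁) (by omega)
          rw [show (Lp σ (plusSeq xb₁) t₁ : ℤ) - 1 - k₁ + k₁ = (Lp σ (plusSeq xb₁) t₁ : ℤ) - 1 by ring] at hv
          rw [show (Lp σ (plusSeq xb₁) t₁ : ℤ) - 1 - k₁ + k₂ = (Lp σ (plusSeq xb₂) t₂ : ℤ) - 1 by omega] at hv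
          exact hv
        have hlast : (σ (plusSeq xb₁ (t₁ - 1))).getLast?
            = (σ (plusSeq xb₂ (t₂ - 1))).getLast? := by
          rw [hl₁, hl₂]
          rw [hZ₁, hZ₂] at hvv
          exact congrArg some hvv
        have hleteq : plusSeq xb₁ (t₁ - 1) = plusSeq xb₂ (t₂ - 1) := hrm _ _ hlast
        have e1 := Lp_succ σ (plusSeq xb₁) (t₁ - 1)
        have e2 := Lp_succ σ (plusSeq xb₂) (t₂ - 1)
        rw [show t₁ - 1 + 1 = t₁ by omega] at e1
        rw [show t₂ - 1 + 1 = t₂ by omega] at e2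
        rw [hleteq] at e1
        constructor
        · rw [show m₀ - (j+1) = t₁ - 1 by omega, show m₀'' - (j+1) = t₂ - 1 by omega]
          omega
        · intro i hi
          rcases Nat.eq_zero_or_pos i with rfl | hipos
          · rw [show m₀ - (j+1) + 0 = t₁ - 1 by omega, show m₀'' - (j+1) + 0 = t₂ - 1 by omega]
            exact hleteq
          · rw [show m₀ - (j+1) + i = t₁ + (i - 1) by omega,
              show m₀'' - (j+1) + i = t₂ + (i - 1) by omega]
            exact hl (i - 1) (by omega)
  -- conclusion
  have hmeq : m₀ = m₀'' := by
    by_contra hne'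
    rcases Nat.lt_or_ge m₀ m₀'' with hlt | hge
    · have hhd := (head m₀ le_rfl (by omega)).1
      rw [Nat.sub_self] at hhd
      have h2 : Lp σ (plusSeq xb₂) 1 ≤ Lp σ (plusSeq xb₂) (m₀'' - m₀) := Lp_mono σ _ (by omega)
      omega
    · have hlt : m₀'' < m₀ := by omega
      have hhd := (head m₀'' (by omega) le_rfl).1
      rw [Nat.sub_self] at hhd
      have h2 : Lp σ (plusSeq xb₁) 1 ≤ Lp σ (plusSeq xb₁) (m₀ - m₀'') := Lp_mono σ _ (by omega)
      omega
  have hkeq : k₁ = k₂ := by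
    have hhd := (head m₀ le_rfl (by omega)).1
    rw [Nat.sub_self, show m₀'' - m₀ = 0 by omega] at hhd
    omega
  have hfun : plusSeq xb₁ = plusSeq xb₂ := by
    funext i
    rcases Nat.lt_or_ge i m₀ with hi | hi
    · have hhd := (head m₀ le_rfl (by omega)).2 i hi
      rw [Nat.sub_self, Nat.zero_add, show m₀'' - m₀ + i = i by omega] at hhd
      exact hhd
    · have htl := (tail (i - m₀)).1
      rw [show m₀ + (i - m₀) = i by omega, show m₀'' + (i - m₀) = i by omega] at htl
      exact htl
  exact ⟨hfun, hkeq⟩
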